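/- Let f : ℝⁿ → ℝ be three times differentiable and quasi-self-concordant with parameter M ≥ 0, meaning ∇³f(x)[h,h,u] ≤ M·⟨∇²f(x)h, h⟩·‖u‖ for all x, h, u. Then for all x, h, ‖∇f(x+h) − ∇f(x) − ∇²f(x)h‖ ≤ M·⟨∇²f(x)h,h⟩·φ(M‖h‖), where φ(t) = (eᵗ − t − 1)/t². -/

import Mathlib

open scoped RealInnerProductSpace

noncomputable def qscPhi (t : ℝ) : ℝ :=
  if t = 0 then 1 / 2 else (Real.exp t - t - 1) / t ^ 2

variable {n : ℕ}
local notation "E" => EuclideanSpace ℝ (Fin n)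

lemma qsc_inner_eq (f : E → ℝ) (y h u : E) :
    ⟪fderiv ℝ (gradient f) y h, u⟫ = iteratedFDeriv ℝ 2 f y ![h, u] := by
  have hg : gradient f = ⇑(InnerProductSpace.toDual ℝ E).symm ∘ fderiv ℝ f := rfl
  rw [iteratedFDeriv_two_apply, hg, LinearIsometryEquiv.comp_fderiv]
  simp only [ContinuousLinearMap.coe_comp', Function.comp_apply,
    LinearIsometryEquiv.coe_coe, Matrix.cons_val_zero, Matrix.cons_val_one, Matrix.head_cons]
  exact InnerProductSpace.toDual_symm_apply

lemma qsc_line (x h : E) (t : ℝ) : HasDerivAt (fun s : ℝ => x + s • h) h t := by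
  simpa using ((hasDerivAt_id t).smul_const h).const_add x

lemma qsc_hasDerivAt2 (f : E → ℝ) (hf : ContDiff ℝ 3 f) (x h u : E) (t : ℝ) :
    HasDerivAt (fun s : ℝ => iteratedFDeriv ℝ 2 f (x + s • h) ![h, u])
      (iteratedFDeriv ℝ 3 f (x + t • h) ![h, h, u]) t := by
  have hG : ContDiff ℝ 1 (iteratedFDeriv ℝ 2 f) := hf.iteratedFDeriv_right (by norm_num)
  have hGd : HasFDerivAt (iteratedFDeriv ℝ 2 f)
      (fderiv ℝ (iteratedFDeriv ℝ 2 f) (x + t • h)) (x + t • h) :=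
    (hG.differentiable (by norm_num) _).hasFDerivAt
  have h2 := hGd.comp_hasDerivAt t (qsc_line x h t)
  have h3 := (ContinuousMultilinearMap.apply ℝ (fun _ : Fin 2 => E) ℝ
      ![h, u]).hasFDerivAt.comp_hasDerivAt t h2
  have h4 := iteratedFDeriv_succ_apply_left (𝕜 := ℝ) (n := 2) (f := f)
      (x := x + t • h) (m := ![h, h, u])
  simp only [Matrix.cons_val_zero] at h4
  rw [show Fin.tail ![h, h, u] = ![h, u] from by ext i; fin_cases i <;> rfl] at h4
  exact h4 ▸ h3

lemma qsc_grad_contDiff (f : E → ℝ) (hf : ContDiff ℝ 3 f) : ContDiff ℝ 2 (gradient f) := by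
  have hg : gradient f = ⇑(InnerProductSpace.toDual ℝ E).symm ∘ fderiv ℝ f := rfl
  rw [hg]
  exact (InnerProductSpace.toDual ℝ E).symm.contDiff.comp (hf.fderiv_right (by norm_num))

lemma qsc_hasDerivAt1 (f : E → ℝ) (hf : ContDiff ℝ 3 f) (x h u : E) (t : ℝ) :
    HasDerivAt (fun s : ℝ => ⟪gradient f (x + s • h), u⟫)
      (⟪fderiv ℝ (gradient f) (x + t • h) h, u⟫) t := by
  have hgd : HasFDerivAt (gradient f) (fderiv ℝ (gradient f) (x + t • h)) (x + t • h) :=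
    ((qsc_grad_contDiff f hf).differentiable (by norm_num) _).hasFDerivAt
  have h2 := hgd.comp_hasDerivAt t (qsc_line x h t)
  have h3 := (h2.inner ℝ (hasDerivAt_const t u))
  simpa using h3


lemma qsc_mono_deriv_nonneg {g : ℝ → ℝ} (hm : Monotone g) {d t : ℝ}
    (hd : HasDerivAt g d t) : 0 ≤ d := by
  have h1 : Filter.Tendsto (slope g t) (nhdsWithin t {t}ᶜ) (nhds d) :=
    hasDerivAt_iff_tendsto_slope.mp hd
  refine ge_of_tendsto h1 ?_
  filter_upwards [self_mem_nhdsWithin] with s hs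
  rw [slope_def_field, div_nonneg_iff]
  rcases lt_or_gt_of_ne (Ne.symm (hs : s ≠ t)) with hlt | hgt
  · exact Or.inl ⟨by have := hm hlt.le; linarith, by linarith⟩
  · exact Or.inr ⟨by have := hm hgt.le; linarith, by linarith⟩

lemma qsc_hess_nonneg (f : E → ℝ) (hf : ContDiff ℝ 3 f)
    (hconv : ConvexOn ℝ Set.univ f) (y h : E) :
    0 ≤ ⟪fderiv ℝ (gradient f) y h, h⟫ := by
  set q' : ℝ → ℝ := fun t => ⟪gradient f (y + t • h), h⟫ with hq'def
  have hfd : Differentiable ℝ f := hf.differentiable (by norm_num)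
  have hq : ConvexOn ℝ Set.univ (fun t : ℝ => f (y + t • h)) := by
    have h1 := hconv.comp_affineMap (AffineMap.lineMap y (y + h) : ℝ →ᵃ[ℝ] E)
    have h2 : (f ∘ (AffineMap.lineMap y (y + h) : ℝ →ᵃ[ℝ] E)) = fun t : ℝ => f (y + t • h) := by
      funext t; simp [AffineMap.lineMap_apply, add_sub_cancel_left, add_comm]
    rw [h2] at h1
    simpa using h1
  have hqd : ∀ t : ℝ, HasDerivAt (fun s : ℝ => f (y + s • h)) (q' t) t := by
    intro t
    have h2 := (hfd _).hasFDerivAt.comp_hasDerivAt t (qsc_line y h t)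
    have h3 : fderiv ℝ f (y + t • h) h = q' t := by
      rw [hq'def]
      exact (InnerProductSpace.toDual_symm_apply).symm
    exact h3 ▸ h2
  have hmono : Monotone q' := by
    have h4 := hq.monotoneOn_deriv (fun z _ => ((hqd z).differentiableAt))
    intro a b hab
    have h5 : deriv (fun s : ℝ => f (y + s • h)) a = q' a := (hqd a).deriv
    have h6 : deriv (fun s : ℝ => f (y + s • h)) b = q' b := (hqd b).deriv
    have := h4 (Set.mem_univ a) (Set.mem_univ b) hab
    rwa [h5, h6] at this
  have hD : HasDerivAt q' (⟪fderiv ℝ (gradient f) (y + (0:ℝ) • h) h, h⟫) 0 :=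
    qsc_hasDerivAt1 f hf y h h 0
  have h0 : y + (0:ℝ) • h = y := by simp
  rw [h0] at hD
  exact qsc_mono_deriv_nonneg hmono hD

lemma qscPhi_nonneg {t : ℝ} (ht : 0 ≤ t) : 0 ≤ qscPhi t := by
  unfold qscPhi
  split_ifs with h
  · norm_num
  · exact div_nonneg (by nlinarith [Real.add_one_le_exp t]) (sq_nonneg t)

theorem quasi_self_concordant_gradient_approx {n : ℕ}
    (f : EuclideanSpace ℝ (Fin n) → ℝ) (M : ℝ) (hM : 0 ≤ M)
    (hf : ContDiff ℝ 3 f) (hconv : ConvexOn ℝ Set.univ f)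
    (hqsc : ∀ x h u : EuclideanSpace ℝ (Fin n),
      iteratedFDeriv ℝ 3 f x ![h, h, u]
        ≤ M * ⟪fderiv ℝ (gradient f) x h, h⟫ * ‖u‖) :
    ∀ x h : EuclideanSpace ℝ (Fin n),
      ‖gradient f (x + h) - gradient f x - fderiv ℝ (gradient f) x h‖
        ≤ M * ⟪fderiv ℝ (gradient f) x h, h⟫ * qscPhi (M * ‖h‖) := by
  intro x h
  by_cases hh : h = 0
  · subst hh; simp
  set g0 : ℝ := ⟪fderiv ℝ (gradient f) x h, h⟫ with hg0def
  have hg0 : 0 ≤ g0 := qsc_hess_nonneg f hf hconv x h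
  set v := gradient f (x + h) - gradient f x - fderiv ℝ (gradient f) x h with hvdef
  set C : ℝ := M * g0 * qscPhi (M * ‖h‖) with hCdef
  have hC : 0 ≤ C :=
    mul_nonneg (mul_nonneg hM hg0) (qscPhi_nonneg (mul_nonneg hM (norm_nonneg h)))
  have claim : ∀ u : EuclideanSpace ℝ (Fin n), ⟪v, u⟫ ≤ C * ‖u‖ := by
    intro u
    set g : ℝ → ℝ := fun t => iteratedFDeriv ℝ 2 f (x + t • h) ![h, h] with hgdef
    set w : ℝ → ℝ := fun t => iteratedFDeriv ℝ 2 f (x + t • h) ![h, u] with hwdef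
    have hginner : ∀ t : ℝ, g t = ⟪fderiv ℝ (gradient f) (x + t • h) h, h⟫ :=
      fun t => (qsc_inner_eq f _ h h).symm
    have hwinner : ∀ t : ℝ, w t = ⟪fderiv ℝ (gradient f) (x + t • h) h, u⟫ :=
      fun t => (qsc_inner_eq f _ h u).symm
    have hx0 : x + (0:ℝ) • h = x := by simp
    have hgz : g 0 = g0 := by rw [hginner 0, hx0]
    set w0 : ℝ := ⟪fderiv ℝ (gradient f) x h, u⟫ with hw0def
    have hwz : w 0 = w0 := by rw [hwinner 0, hx0]
    have hgd : ∀ t : ℝ, HasDerivAt g (iteratedFDeriv ℝ 3 f (x + t • h) ![h, h, h]) t :=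
      fun t => qsc_hasDerivAt2 f hf x h h t
    have hwd : ∀ t : ℝ, HasDerivAt w (iteratedFDeriv ℝ 3 f (x + t • h) ![h, h, u]) t :=
      fun t => qsc_hasDerivAt2 f hf x h u t
    have hgb : ∀ t : ℝ, iteratedFDeriv ℝ 3 f (x + t • h) ![h, h, h] ≤ (M * ‖h‖) * g t := by
      intro t
      have h1 := hqsc (x + t • h) h h
      rw [← hginner t] at h1
      calc iteratedFDeriv ℝ 3 f (x + t • h) ![h, h, h] ≤ M * g t * ‖h‖ := h1
        _ = (M * ‖h‖) * g t := by ring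
    have hwb : ∀ t : ℝ, iteratedFDeriv ℝ 3 f (x + t • h) ![h, h, u] ≤ M * g t * ‖u‖ := by
      intro t
      have h1 := hqsc (x + t • h) h u
      rwa [← hginner t] at h1
    set ψ : ℝ → ℝ := fun t => ⟪gradient f (x + t • h), u⟫ - ⟪gradient f x, u⟫ - t * w0
      with hψdef
    have hψd : ∀ t : ℝ, HasDerivAt ψ (w t - w0) t := by
      intro t
      have h1 := ((qsc_hasDerivAt1 f hf x h u t).sub_const
        (⟪gradient f x, u⟫)).sub ((hasDerivAt_id t).mul_const w0)
      rw [hwinner t]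
      exact h1.congr_deriv (by ring)
    have hψ0 : ψ 0 = 0 := by simp [hψdef]
    have hψ1 : ψ 1 = ⟪v, u⟫ := by
      rw [hψdef, hvdef]
      simp [inner_sub_left, hw0def]
    rcases eq_or_lt_of_le hM with hM0 | hMpos
    · -- M = 0
      have hwanti : Antitone w := by
        refine antitone_of_deriv_nonpos (fun t => (hwd t).differentiableAt) (fun t => ?_)
        rw [(hwd t).deriv]
        calc iteratedFDeriv ℝ 3 f (x + t • h) ![h, h, u] ≤ M * g t * ‖u‖ := hwb t
          _ = 0 := by rw [← hM0]; ring
      have hψanti : AntitoneOn ψ (Set.Ici (0:ℝ)) := by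
        refine antitoneOn_of_deriv_nonpos (convex_Ici 0)
          (Continuous.continuousOn ?_) ?_ ?_
        · have : Differentiable ℝ ψ := fun t => (hψd t).differentiableAt
          exact this.continuous
        · exact fun t _ => (hψd t).differentiableAt.differentiableWithinAt
        · intro t ht
          rw [interior_Ici] at ht
          rw [(hψd t).deriv]
          have := hwanti (le_of_lt ht)
          rw [hwz] at this
          linarith
      have h2 : ψ 1 ≤ ψ 0 := hψanti (Set.self_mem_Ici) (by norm_num) (by norm_num)
      rw [hψ0, hψ1] at h2
      have hC0 : C = 0 := by rw [hCdef, ← hM0]; ring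
      calc ⟪v, u⟫ ≤ 0 := h2
        _ ≤ C * ‖u‖ := mul_nonneg hC (norm_nonneg u)
    · -- M > 0
      set τ : ℝ := M * ‖h‖ with hτdef
      have hτ : 0 < τ := mul_pos hMpos (norm_pos_iff.mpr hh)
      have hexpneg : ∀ t : ℝ, HasDerivAt (fun s : ℝ => Real.exp (-(τ * s)))
          (Real.exp (-(τ * t)) * (-τ)) t := by
        intro t
        have h1 : HasDerivAt (fun s : ℝ => -(τ * s)) (-τ) t := by
          exact (((hasDerivAt_id t).const_mul τ).neg).congr_deriv (by ring)
        simpa using h1.exp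
      have hexp2 : ∀ t : ℝ, HasDerivAt (fun s : ℝ => Real.exp (τ * s))
          (Real.exp (τ * t) * τ) t := by
        intro t
        have h1 : HasDerivAt (fun s : ℝ => τ * s) τ t := by
          simpa using (hasDerivAt_id t).const_mul τ
        simpa using h1.exp
      -- Step 1 : Gronwall
      have hanti : Antitone (fun t : ℝ => g t * Real.exp (-(τ * t))) := by
        refine antitone_of_deriv_nonpos
          (fun t => ((hgd t).mul (hexpneg t)).differentiableAt) (fun t => ?_)
        rw [show deriv (fun t => g t * Real.exp (-(τ * t))) t = _ from ((hgd t).mul (hexpneg t)).deriv]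
        nlinarith [mul_le_mul_of_nonneg_right (hgb t) (Real.exp_pos (-(τ * t))).le]
      have hgexp : ∀ t : ℝ, 0 ≤ t → g t ≤ g0 * Real.exp (τ * t) := by
        intro t ht
        have h1 : g t * Real.exp (-(τ * t)) ≤ g 0 * Real.exp (-(τ * 0)) := by
          simpa using hanti ht
        rw [hgz] at h1
        simp only [mul_zero, neg_zero, Real.exp_zero, mul_one] at h1
        have h2 : Real.exp (-(τ * t)) * Real.exp (τ * t) = 1 := by
          rw [← Real.exp_add]; simp
        calc g t = g t * (Real.exp (-(τ * t)) * Real.exp (τ * t)) := by rw [h2, mul_one]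
          _ = (g t * Real.exp (-(τ * t))) * Real.exp (τ * t) := by ring
          _ ≤ g0 * Real.exp (τ * t) :=
            mul_le_mul_of_nonneg_right h1 (Real.exp_pos _).le
      set K : ℝ := M * g0 * ‖u‖ with hKdef
      -- Step 2
      set b : ℝ → ℝ := fun t => K * ((Real.exp (τ * t) - 1) / τ) - (w t - w0) with hbdef
      have hbd : ∀ t : ℝ, HasDerivAt b
          (K * Real.exp (τ * t) - iteratedFDeriv ℝ 3 f (x + t • h) ![h, h, u]) t := by
        intro t
        have h1 := (((hexp2 t).sub_const 1).div_const τ).const_mul K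
        have h2 := h1.sub ((hwd t).sub_const w0)
        refine h2.congr_deriv ?_
        field_simp
      have hbmono : MonotoneOn b (Set.Ici (0:ℝ)) := by
        refine monotoneOn_of_deriv_nonneg (convex_Ici 0)
          (Continuous.continuousOn ?_) ?_ ?_
        · have : Differentiable ℝ b := fun t => (hbd t).differentiableAt
          exact this.continuous
        · exact fun t _ => (hbd t).differentiableAt.differentiableWithinAt
        · intro t ht
          rw [interior_Ici] at ht
          rw [(hbd t).deriv]
          have h5 := hwb t
          have h6 := mul_le_mul_of_nonneg_left (hgexp t ht.le) (mul_nonneg hM (norm_nonneg u))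
          rw [hKdef]
          nlinarith
      have hb : ∀ t : ℝ, 0 ≤ t → w t - w0 ≤ K * ((Real.exp (τ * t) - 1) / τ) := by
        intro t ht
        have h1 : b 0 ≤ b t := hbmono Set.self_mem_Ici ht ht
        have h2 : b 0 = 0 := by simp [hbdef, hwz]
        rw [h2] at h1
        rw [hbdef] at h1
        simp only at h1
        linarith
      -- Step 3
      set c : ℝ → ℝ := fun t => K * ((Real.exp (τ * t) - τ * t - 1) / τ ^ 2) - ψ t with hcdef
      have hcd : ∀ t : ℝ, HasDerivAt c (K * ((Real.exp (τ * t) - 1) / τ) - (w t - w0)) t := by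
        intro t
        have h1 : HasDerivAt (fun s : ℝ => τ * s) τ t := by
          simpa using (hasDerivAt_id t).const_mul τ
        have h2 := ((((hexp2 t).sub h1).sub_const 1).div_const (τ ^ 2)).const_mul K
        have h3 := h2.sub (hψd t)
        refine h3.congr_deriv ?_
        have : Real.exp (τ * t) * τ - τ = (Real.exp (τ * t) - 1) * τ := by ring
        rw [this]
        field_simp
      have hcmono : MonotoneOn c (Set.Ici (0:ℝ)) := by
        refine monotoneOn_of_deriv_nonneg (convex_Ici 0)
          (Continuous.continuousOn ?_) ?_ ?_
        · have : Differentiable ℝ c := fun t => (hcd t).differentiableAt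
          exact this.continuous
        · exact fun t _ => (hcd t).differentiableAt.differentiableWithinAt
        · intro t ht
          rw [interior_Ici] at ht
          rw [(hcd t).deriv]
          have := hb t ht.le
          linarith
      have hc0 : c 0 = 0 := by simp [hcdef, hψ0]
      have hc1 : c 0 ≤ c 1 := hcmono Set.self_mem_Ici (by norm_num) (by norm_num)
      rw [hc0, hcdef] at hc1
      simp only at hc1
      have hψle : ψ 1 ≤ K * ((Real.exp τ - τ - 1) / τ ^ 2) := by
        have : τ * (1:ℝ) = τ := mul_one τ
        rw [this] at hc1
        linarith
      rw [hψ1] at hψle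
      have hphi : qscPhi τ = (Real.exp τ - τ - 1) / τ ^ 2 := by
        rw [qscPhi, if_neg hτ.ne']
      calc ⟪v, u⟫ ≤ K * ((Real.exp τ - τ - 1) / τ ^ 2) := hψle
        _ = C * ‖u‖ := by rw [hCdef, hKdef, hphi]; ring
  have h1 := claim v
  rcases ((norm_nonneg v).eq_or_lt.imp_left Eq.symm) with h0 | h0
  · rw [h0]; exact hC
  · have h2 : ‖v‖ ^ 2 ≤ C * ‖v‖ := by
      rw [← real_inner_self_eq_norm_sq]
      exact h1
    nlinarith
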